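/- Let W = W(A,T,φ) be a simple generalized Witt algebra over a field F of characteristic 0 (so A ≠ 0 and φ is nondegenerate). Then for any two elements x, y ∈ W there exist a finitely generated (hence free of some finite rank n ≥ 1) subgroup A' of A and a finite-dimensional subspace T' of T such that (A',T') is a nondegenerate pair and both x and y belong to the Lie subalgebra of W consisting of the finitely supported functions supported in A' with values in T'. -/

import Mathlib

/-! Generalized Witt algebras `W(A,T,φ)` over a field `F` of characteristic `0`,
following Djokovic-Zhao. Here `A` is an (additive) abelian group, `T` an
`F`-vector space, and `φ : T × A → F` is `F`-linear in the first variable and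
additive in the second (encoded as `φ : T →ₗ[F] (A →+ F)`). -/

namespace GW

variable {F : Type*} [Field F]
variable {A : Type*} [AddCommGroup A]
variable {T : Type*} [AddCommGroup T] [Module F T]
variable (φ : T →ₗ[F] (A →+ F))

/-- The bracket on finitely supported functions `A →₀ T`: the bilinear extension of
`[t^α a, t^β b] = t^(α+β) (φ a β • b - φ b α • a)`. -/
noncomputable def brk (x y : A →₀ T) : A →₀ T :=
  x.sum fun α a => y.sum fun β b => Finsupp.single (α + β) (φ a β • b - φ b α • a)

lemma brk_zero_left (y : A →₀ T) : brk φ 0 y = 0 := by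
  simp [brk]

lemma brk_zero_right (x : A →₀ T) : brk φ x 0 = 0 := by
  simp [brk]

lemma brk_single_single (α β : A) (a b : T) :
    brk φ (Finsupp.single α a) (Finsupp.single β b)
      = Finsupp.single (α + β) (φ a β • b - φ b α • a) := by
  unfold brk
  rw [Finsupp.sum_single_index, Finsupp.sum_single_index]
  · simp
  · simp

lemma brk_add_left (x x' y : A →₀ T) : brk φ (x + x') y = brk φ x y + brk φ x' y := by
  unfold brk
  rw [Finsupp.sum_add_index']
  · intro α; simp
  · intro α a a'
    rw [← Finsupp.sum_add]
    congr 1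
    funext β b
    rw [← Finsupp.single_add]
    congr 1
    simp only [map_add, LinearMap.add_apply, AddMonoidHom.add_apply, add_smul, smul_add]
    abel

lemma brk_add_right (x y y' : A →₀ T) : brk φ x (y + y') = brk φ x y + brk φ x y' := by
  unfold brk
  rw [← Finsupp.sum_add]
  congr 1
  funext α a
  rw [Finsupp.sum_add_index']
  · intro β; simp
  · intro β b b'
    rw [← Finsupp.single_add]
    congr 1
    simp only [map_add, LinearMap.add_apply, AddMonoidHom.add_apply, add_smul, smul_add]
    abel

lemma brk_neg_swap (x y : A →₀ T) : brk φ y x = - brk φ x y := by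
  unfold brk
  rw [Finsupp.sum_comm]
  rw [← Finsupp.sum_neg]
  congr 1
  funext α a
  rw [← Finsupp.sum_neg]
  congr 1
  funext β b
  rw [← Finsupp.single_neg, add_comm β α]
  congr 1
  abel

lemma brk_smul_right (c : F) (x y : A →₀ T) : brk φ x (c • y) = c • brk φ x y := by
  unfold brk
  rw [Finsupp.smul_sum]
  congr 1
  funext α a
  rw [Finsupp.sum_smul_index', Finsupp.smul_sum]
  · congr 1
    funext β b
    rw [Finsupp.smul_single]
    congr 1
    simp only [map_smul, LinearMap.smul_apply, AddMonoidHom.smul_apply, smul_sub, smul_smul,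
      smul_eq_mul]
    rw [mul_comm]
  · intro β; simp

lemma brk_self [CharZero F] (x : A →₀ T) : brk φ x x = 0 := by
  have h : brk φ x x = -brk φ x x := brk_neg_swap φ x x
  have h2 : (2 : F) • brk φ x x = 0 := by
    rw [two_smul]
    nth_rewrite 2 [h]
    simp
  calc brk φ x x = (2 : F)⁻¹ • ((2 : F) • brk φ x x) :=
        (inv_smul_smul₀ two_ne_zero _).symm
    _ = 0 := by rw [h2, smul_zero]

lemma brk_leibniz (x y z : A →₀ T) :
    brk φ x (brk φ y z) = brk φ (brk φ x y) z + brk φ y (brk φ x z) := by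
  induction x using Finsupp.induction_linear with
  | zero => simp [brk_zero_left, brk_zero_right]
  | add f g hf hg =>
      simp only [brk_add_left, brk_add_right, hf, hg]; abel
  | single α a =>
    induction y using Finsupp.induction_linear with
    | zero => simp [brk_zero_left, brk_zero_right]
    | add f g hf hg =>
        simp only [brk_add_left, brk_add_right, hf, hg]; abel
    | single β b =>
      induction z using Finsupp.induction_linear with
      | zero => simp [brk_zero_left, brk_zero_right]
      | add f g hf hg =>
          simp only [brk_add_left, brk_add_right, hf, hg]; abel
      | single γ c =>
        rw [brk_single_single, brk_single_single, brk_single_single, brk_single_single,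
          brk_single_single, brk_single_single]
        rw [show β + (α + γ) = α + β + γ by abel, show α + (β + γ) = α + β + γ by abel,
          ← Finsupp.single_add]
        congr 1
        simp only [map_add, map_sub, map_smul, LinearMap.sub_apply, LinearMap.smul_apply,
          AddMonoidHom.add_apply, AddMonoidHom.sub_apply, AddMonoidHom.smul_apply,
          smul_eq_mul, smul_sub, sub_smul, add_smul, smul_smul]
        ring_nf
        module

variable (F A T) in
/-- The carrier of the generalized Witt algebra `W(A,T,φ)`: finitely supported
functions from `A` to `T`, where `t^α ∂` corresponds to the function supported
at `α` with value `∂`. -/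
@[nolint unusedArguments]
def W (_φ : T →ₗ[F] (A →+ F)) : Type _ := A →₀ T

noncomputable instance : AddCommGroup (W F A T φ) := inferInstanceAs (AddCommGroup (A →₀ T))

noncomputable instance : Module F (W F A T φ) := inferInstanceAs (Module F (A →₀ T))

/-- The element `t^α ∂` of the generalized Witt algebra. -/
noncomputable def tt (α : A) (d : T) : W F A T φ := Finsupp.single α d

/-- The underlying finitely supported function of an element of `W(A,T,φ)`. -/
def toF (x : W F A T φ) : A →₀ T := x

/-- The Lie ring structure on the generalized Witt algebra `W(A,T,φ)`, with bracket
determined by `[t^α ∂, t^β ∂'] = t^(α+β) (φ(∂,β) • ∂' - φ(∂',α) • ∂)`. -/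
noncomputable instance [CharZero F] : LieRing (W F A T φ) :=
  { (inferInstance : AddCommGroup (A →₀ T)) with
    bracket := fun x y => brk φ (toF φ x) (toF φ y)
    add_lie := fun x y z => brk_add_left φ x y z
    lie_add := fun x y z => brk_add_right φ x y z
    lie_self := fun x => brk_self φ x
    leibniz_lie := fun x y z => brk_leibniz φ x y z }

/-- The generalized Witt algebra `W(A,T,φ)` as a Lie algebra over `F`. -/
noncomputable instance [CharZero F] : LieAlgebra F (W F A T φ) :=
  { (inferInstance : Module F (A →₀ T)) with
    lie_smul := fun c x y => brk_smul_right φ c x y }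

@[simp] theorem bracket_tt [CharZero F] (α β : A) (a b : T) :
    ⁅tt φ α a, tt φ β b⁆ = tt φ (α + β) (φ a β • b - φ b α • a) :=
  brk_single_single φ α β a b

/-- Nondegeneracy of the map `φ`. -/
def Nondeg : Prop :=
  (∀ α : A, (∀ d : T, φ d α = 0) → α = 0) ∧ (∀ d : T, (∀ α : A, φ d α = 0) → d = 0)

/-- `(A', T')` is a nondegenerate pair for `φ`. -/
def NondegPair (A' : AddSubgroup A) (T' : Submodule F T) : Prop :=
  (∀ d ∈ T', (∀ α ∈ A', φ d α = 0) → d = 0) ∧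
  (∀ α ∈ A', (∀ d ∈ T', φ d α = 0) → α = 0)

/-- The subset (in fact Lie subalgebra) of `W(A,T,φ)` consisting of the finitely
supported functions supported in `A'` with values in `T'`. -/
def supportedIn (A' : AddSubgroup A) (T' : Submodule F T) : Set (W F A T φ) :=
  {x | (∀ α : A, toF φ x α ∈ T') ∧ ∀ α : A, α ∉ A' → toF φ x α = 0}

end GW

namespace GW

section Aux

variable {F : Type*} [Field F]
variable {A : Type*} [AddCommGroup A]
variable {T : Type*} [AddCommGroup T] [Module F T]
variable (φ : T →ₗ[F] (A →+ F))

/-- The evaluation of `φ` at `α ∈ A`, as a linear functional on `T`. -/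
noncomputable def eL (α : A) : T →ₗ[F] F where
  toFun d := φ d α
  map_add' d d' := by simp
  map_smul' c d := by simp

@[simp] lemma eL_apply (α : A) (d : T) : eL φ α d = φ d α := rfl

/-- From nondegeneracy on the `T` side, any finite-dimensional subspace is
detected by finitely many elements of `A`. -/
lemma exists_finset_detect (hφ : ∀ d : T, (∀ α : A, φ d α = 0) → d = 0) :
    ∀ (n : ℕ) (V : Submodule F T), FiniteDimensional F V → Module.finrank F V ≤ n →
      ∃ B : Finset A, ∀ d ∈ V, (∀ α ∈ B, φ d α = 0) → d = 0 := by
  classical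
  intro n
  induction n with
  | zero =>
    intro V hfd hle
    have hV : V = ⊥ := by
      haveI := hfd
      exact Submodule.finrank_eq_zero.mp (Nat.le_zero.mp hle)
    exact ⟨∅, fun d hd _ => by simpa [hV] using hd⟩
  | succ n ih =>
    intro V hfd hle
    haveI := hfd
    by_cases hbot : V = ⊥
    · exact ⟨∅, fun d hd _ => by simpa [hbot] using hd⟩
    · obtain ⟨d₀, hd₀V, hd₀⟩ := Submodule.exists_mem_ne_zero_of_ne_bot hbot
      have : ¬ ∀ α : A, φ d₀ α = 0 := fun h => hd₀ (hφ d₀ h)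
      push_neg at this
      obtain ⟨α₀, hα₀⟩ := this
      set V₁ := V ⊓ LinearMap.ker (eL φ α₀) with hV₁
      have hV₁lt : V₁ < V := by
        refine lt_of_le_of_ne inf_le_left (fun h => ?_)
        have : d₀ ∈ V₁ := h ▸ hd₀V
        exact hα₀ (by simpa using this.2)
      have hV₁fd : FiniteDimensional F V₁ := Submodule.finiteDimensional_of_le hV₁lt.le
      have hrank : Module.finrank F V₁ ≤ n := by
        have := Submodule.finrank_lt_finrank_of_lt (t := V) hV₁lt
        omega
      obtain ⟨B₁, hB₁⟩ := ih V₁ hV₁fd hrank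
      refine ⟨insert α₀ B₁, fun d hd h0 => ?_⟩
      refine hB₁ d ⟨hd, ?_⟩ (fun α hα => h0 α (Finset.mem_insert_of_mem hα))
      simpa using h0 α₀ (Finset.mem_insert_self _ _)

end Aux

end GW

/-- Lemma 3.1: any two elements `x, y` of a simple generalized Witt
algebra `W(A,T,φ)` lie in the subalgebra of elements supported in `A'` with values in
`T'`, for some nonzero finitely generated (hence free of finite rank `n ≥ 1`) subgroup
`A'` of `A` and some finite-dimensional subspace `T'` of `T` forming a nondegenerate
pair. -/
theorem GW.mem_finite_subalgebra
    {F : Type*} [Field F] [CharZero F]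
    {A : Type*} [AddCommGroup A]
    {T : Type*} [AddCommGroup T] [Module F T]
    (φ : T →ₗ[F] (A →+ F))
    (hA : Nontrivial A) (hφ : GW.Nondeg φ)
    (x y : GW.W F A T φ) :
    ∃ (A' : AddSubgroup A) (T' : Submodule F T),
      A'.FG ∧ A' ≠ ⊥ ∧ FiniteDimensional F T' ∧ GW.NondegPair φ A' T' ∧
      x ∈ GW.supportedIn φ A' T' ∧ y ∈ GW.supportedIn φ A' T' := by
  classical
  obtain ⟨α₀, hα₀⟩ := exists_ne (0 : A)
  set X : A →₀ T := GW.toF φ x with hX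
  set Y : A →₀ T := GW.toF φ y with hY
  -- the span of the values of x and y
  set V : Submodule F T := Submodule.span F (↑(X.frange ∪ Y.frange) : Set T) with hV
  haveI hVfd : FiniteDimensional F V := FiniteDimensional.span_finset F _
  obtain ⟨B, hB⟩ := GW.exists_finset_detect φ hφ.2 (Module.finrank F V) V hVfd le_rfl
  -- the finite generating set and the subgroup A'
  set G : Finset A := insert α₀ (X.support ∪ Y.support ∪ B) with hG
  set A' : AddSubgroup A := AddSubgroup.closure (G : Set A) with hA'
  have hGA' : ∀ α ∈ G, α ∈ A' := fun α hα => AddSubgroup.subset_closure hα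
  -- the kernel subspace
  set K : Submodule F T :=
    { carrier := {d | ∀ α ∈ A', φ d α = 0}
      add_mem' := fun {a b} ha hb α hα => by simp [ha α hα, hb α hα]
      zero_mem' := fun α _ => by simp
      smul_mem' := fun c d hd α hα => by simp [hd α hα] } with hK
  have hKmem : ∀ d : T, d ∈ K ↔ ∀ α ∈ A', φ d α = 0 := fun d => Iff.rfl
  -- membership in K follows from vanishing on G
  have hKG : ∀ d : T, (∀ α ∈ G, φ d α = 0) → d ∈ K := by
    intro d h α hα
    have hle : AddSubgroup.closure (G : Set A) ≤ (φ d).ker :=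
      (AddSubgroup.closure_le _).mpr (fun g hg => AddMonoidHom.mem_ker.mpr (h g hg))
    exact AddMonoidHom.mem_ker.mp (hle hα)
  -- K has finite codimension
  set L : T →ₗ[F] (G → F) := LinearMap.pi (fun a => GW.eL φ (a : A)) with hL
  have hKker : K = LinearMap.ker L := by
    apply le_antisymm
    · intro d hd
      rw [LinearMap.mem_ker]
      funext a
      exact hd a.1 (hGA' a.1 a.2)
    · intro d hd
      apply hKG
      intro α hα
      have := congrFun (LinearMap.mem_ker.mp hd) ⟨α, hα⟩
      simpa [hL, LinearMap.pi_apply] using this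
  haveI hQ1 : FiniteDimensional F (T ⧸ LinearMap.ker L) :=
    (LinearMap.quotKerEquivRange L).symm.finiteDimensional
  haveI hQ1' : FiniteDimensional F (T ⧸ K) := by rw [hKker]; exact hQ1
  haveI hQ : FiniteDimensional F (T ⧸ (V ⊔ K)) := by
    have hle : K ≤ LinearMap.ker ((V ⊔ K).mkQ) := by
      rw [Submodule.ker_mkQ]; exact le_sup_right
    have hsurj : Function.Surjective (K.liftQ ((V ⊔ K).mkQ) hle) := by
      intro q
      obtain ⟨t, rfl⟩ := Submodule.mkQ_surjective _ q
      exact ⟨Submodule.Quotient.mk t, Submodule.liftQ_apply _ _ _⟩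
    exact Module.Finite.of_surjective _ hsurj
  -- a complement of V ⊔ K
  obtain ⟨C, hC⟩ := Submodule.exists_isCompl (V ⊔ K)
  haveI hCfd : FiniteDimensional F C :=
    (Submodule.quotientEquivOfIsCompl (V ⊔ K) C hC).finiteDimensional
  set T' : Submodule F T := V ⊔ C with hT'
  haveI hT'fd : FiniteDimensional F T' := Submodule.finiteDimensional_sup V C
  have hVT' : V ≤ T' := le_sup_left
  have hCT' : C ≤ T' := le_sup_right
  -- key: T' ⊓ K = ⊥
  have hT'K : ∀ d : T, d ∈ T' → d ∈ K → d = 0 := by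
    intro d hdT' hdK
    obtain ⟨v, hv, c, hc, rfl⟩ := Submodule.mem_sup.mp hdT'
    have hcVK : c ∈ V ⊔ K := by
      have : (v + c) - v ∈ V ⊔ K :=
        Submodule.sub_mem _ (Submodule.mem_sup_right hdK) (Submodule.mem_sup_left hv)
      simpa using this
    have hc0 : c = 0 := Submodule.disjoint_def.mp hC.disjoint c hcVK hc
    subst hc0
    rw [add_zero] at hdK ⊢
    exact hB v hv (fun α hα => hdK α (hGA' α (by simp [hG, hα])))
  refine ⟨A', T', ⟨G, rfl⟩, ?_, hT'fd, ⟨?_, ?_⟩, ?_, ?_⟩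
  · -- A' ≠ ⊥
    intro h
    have : α₀ ∈ A' := hGA' α₀ (by simp [hG])
    rw [h, AddSubgroup.mem_bot] at this
    exact hα₀ this
  · -- nondeg pair, T side
    intro d hd hcond
    exact hT'K d hd (fun α hα => hcond α hα)
  · -- nondeg pair, A side
    intro α hα hcond
    apply hφ.1 α
    intro d
    have hdtop : d ∈ (V ⊔ K) ⊔ C := by
      rw [hC.codisjoint.eq_top]; trivial
    obtain ⟨u, hu, c, hc, rfl⟩ := Submodule.mem_sup.mp hdtop
    obtain ⟨v, hv, k, hk, rfl⟩ := Submodule.mem_sup.mp hu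
    have h1 : φ v α = 0 := hcond v (hVT' hv)
    have h2 : φ c α = 0 := hcond c (hCT' hc)
    have h3 : φ k α = 0 := hk α hα
    simp [map_add, h1, h2, h3]
  · -- x is supported correctly
    refine ⟨fun α => ?_, fun α hα => ?_⟩
    · by_cases h : GW.toF φ x α = 0
      · rw [h]; exact Submodule.zero_mem _
      · apply hVT'
        apply Submodule.subset_span
        simp only [Finset.coe_union, Set.mem_union, Finset.mem_coe]
        exact Or.inl (Finsupp.mem_frange.mpr ⟨h, α, rfl⟩)
    · by_contra h
      exact hα (hGA' α (by simp [hG, hX, h, Finsupp.mem_support_iff.mpr h]))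
  · -- y is supported correctly
    refine ⟨fun α => ?_, fun α hα => ?_⟩
    · by_cases h : GW.toF φ y α = 0
      · rw [h]; exact Submodule.zero_mem _
      · apply hVT'
        apply Submodule.subset_span
        simp only [Finset.coe_union, Set.mem_union, Finset.mem_coe]
        exact Or.inr (Finsupp.mem_frange.mpr ⟨h, α, rfl⟩)
    · by_contra h
      exact hα (hGA' α (by simp [hG, hY, h, Finsupp.mem_support_iff.mpr h]))
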